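/- Let G be a symmetric n×n real matrix. Define the matrix-valued function Γ(u) = G·(1 − U(u)·G)⁻¹, where U(u) = diag(u_1,…,u_n), on the open set of points u ∈ ℝⁿ where 1 − U(u)·G is invertible. Then Γ(0) = G and, for every k = 1,…,n and every u in this open set, the partial derivative of Γ with respect to u_k satisfies ∂Γ/∂u_k = Γ·E_k·Γ; that is, Γ solves the basic system with initial data G. -/

import Mathlib

attribute [local instance] Matrix.linftyOpNormedAddCommGroup Matrix.linftyOpNormedSpace
  Matrix.linftyOpNormedRing Matrix.linftyOpNormedAlgebra

lemma diag_update {n : ℕ} (u : Fin n → ℝ) (k : Fin n) (t : ℝ) :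
    Matrix.diagonal (Function.update u k t)
      = Matrix.diagonal u + (t - u k) • Matrix.single k k (1 : ℝ) := by
  ext i j
  rcases eq_or_ne i k with rfl | hik <;> rcases eq_or_ne j i with rfl | hj <;>
    simp_all [Matrix.single, Matrix.diagonal_apply, Function.update_apply, eq_comm]

/-- Let `G` be a symmetric `n × n` real matrix and define
`Γ u = G * (1 - diagonal u * G)⁻¹`.  Then `Γ 0 = G` and, for every point `u`
at which `1 - diagonal u * G` is invertible, the partial derivative of each
entry of `Γ` in the `k`-th coordinate direction equals the corresponding entry
of `Γ u * Eₖ * Γ u`, where `Eₖ = stdBasisMatrix k k 1`; that is, `Γ` solves the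
basic system `∂Γ/∂uₖ = Γ Eₖ Γ` with initial data `G`. -/
theorem stmt1 {n : ℕ} (G : Matrix (Fin n) (Fin n) ℝ) (hG : G.IsSymm)
    (Γ : (Fin n → ℝ) → Matrix (Fin n) (Fin n) ℝ)
    (hΓ : ∀ u : Fin n → ℝ, Γ u = G * (1 - Matrix.diagonal u * G)⁻¹) :
    Γ 0 = G ∧
      ∀ u : Fin n → ℝ, IsUnit (1 - Matrix.diagonal u * G) →
        ∀ k i j : Fin n,
          HasDerivAt (fun t : ℝ => Γ (Function.update u k t) i j)
            ((Γ u * Matrix.single k k (1 : ℝ) * Γ u) i j) (u k) := by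
  constructor
  · have h0 : Matrix.diagonal (0 : Fin n → ℝ) = 0 := Matrix.diagonal_zero
    rw [hΓ 0, h0, Matrix.zero_mul, sub_zero, inv_one, mul_one]
  · intro u hS k i j
    set E := Matrix.single k k (1 : ℝ) with hE
    set B := E * G with hB
    set S := (1 : Matrix (Fin n) (Fin n) ℝ) - Matrix.diagonal u * G with hSdef
    have haS : ((hS.unit⁻¹ : (Matrix (Fin n) (Fin n) ℝ)ˣ) : Matrix (Fin n) (Fin n) ℝ)
        = S⁻¹ := by
      rw [← Ring.inverse_unit hS.unit, hS.unit_spec, ← Matrix.nonsing_inv_eq_ringInverse]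
    set a := ((hS.unit⁻¹ : (Matrix (Fin n) (Fin n) ℝ)ˣ) : Matrix (Fin n) (Fin n) ℝ) with ha
    -- the affine path
    have hM : ∀ t : ℝ, (1 : Matrix (Fin n) (Fin n) ℝ)
        - Matrix.diagonal (Function.update u k t) * G = S - (t - u k) • B := by
      intro t
      rw [diag_update, add_mul, smul_mul_assoc, hSdef, hB, hE]
      abel
    have hf : HasDerivAt (fun t : ℝ => S - (t - u k) • B) (-B) (u k) := by
      have h1 : HasDerivAt (fun t : ℝ => (t - u k) • B) ((1 : ℝ) • B) (u k) :=
        ((hasDerivAt_id (u k)).sub_const (u k)).smul_const B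
      have h2 := h1.const_sub S
      simp only [one_smul] at h2
      exact h2
    -- derivative of the inverse
    have hf0 : S - (u k - u k) • B = S := by simp
    have hinv : HasFDerivAt Ring.inverse
        (-(ContinuousLinearMap.mulLeftRight ℝ (Matrix (Fin n) (Fin n) ℝ) a a))
        (S - (u k - u k) • B) := by
      have := hasFDerivAt_ringInverse (𝕜 := ℝ) hS.unit
      rw [hS.unit_spec] at this
      rw [hf0]
      exact this
    have comp : HasDerivAt (fun t : ℝ => Ring.inverse (S - (t - u k) • B))
        ((-(ContinuousLinearMap.mulLeftRight ℝ (Matrix (Fin n) (Fin n) ℝ) a a)) (-B)) (u k) :=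
      by have h3 := hinv.comp_hasDerivAt (u k) hf; exact h3
    have hval : ((-(ContinuousLinearMap.mulLeftRight ℝ (Matrix (Fin n) (Fin n) ℝ) a a)) (-B))
        = a * B * a := by
      simp [ContinuousLinearMap.mulLeftRight_apply]
    rw [hval] at comp
    have comp2 : HasDerivAt (fun t : ℝ => G * Ring.inverse (S - (t - u k) • B))
        (G * (a * B * a)) (u k) := comp.const_mul G
    -- extract the (i, j) entry
    let L : Matrix (Fin n) (Fin n) ℝ →ₗ[ℝ] ℝ :=
      { toFun := fun M => M i j, map_add' := fun _ _ => rfl, map_smul' := fun _ _ => rfl }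
    have final : HasDerivAt
        (fun t : ℝ => L.toContinuousLinearMap (G * Ring.inverse (S - (t - u k) • B)))
        (L.toContinuousLinearMap (G * (a * B * a))) (u k) :=
      (L.toContinuousLinearMap.hasFDerivAt).comp_hasDerivAt (u k) comp2
    have heq : (fun t : ℝ => L.toContinuousLinearMap (G * Ring.inverse (S - (t - u k) • B)))
        = fun t : ℝ => Γ (Function.update u k t) i j := by
      funext t
      rw [hΓ, hM t, Matrix.nonsing_inv_eq_ringInverse]
      rfl
    have hval2 : L.toContinuousLinearMap (G * (a * B * a))
        = (Γ u * E * Γ u) i j := by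
      have : G * (a * B * a) = Γ u * E * Γ u := by
        rw [hΓ u, haS, hB, ← hSdef]
        simp only [mul_assoc]
      rw [this]
      rfl
    rw [heq, hval2] at final
    exact final
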